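/- For any leaves l, l_pa, l_na, l_pb, l_nb (values in {0,1,...,N} with 0 meaning 'nonexistent'), the ratio (P(l,l_pa)·P(l_na,l)·P(l_nb,l_pb)) / (P(l_na,l_pa)·P(l,l_pb)·P(l_nb,l)) is at most (p₁/p₂)², under the assumptions p₂ ≤ 1/N ≤ p₁ and 0 < p₂ ≤ p₁. -/

import Mathlib

noncomputable def kdelta (N : ℕ) (p : ℝ) (z x : ℕ) : ℝ :=
  if x = 0 then (1 / (N : ℝ) - p / ((N : ℝ) - 1)) / ((1 - p) - p / ((N : ℝ) - 1))
  else if z = x then 1 else 0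

noncomputable def Ptrans (N : ℕ) (p : ℝ) (z x : ℕ) : ℝ :=
  p / ((N : ℝ) - 1) + ((1 - p) - p / ((N : ℝ) - 1)) * kdelta N p z x

theorem three_factor_ratio_le (N : ℕ) (hN : 2 ≤ N) (p : ℝ) (hp0 : 0 < p)
    (hp : p < ((N : ℝ) - 1) / N)
    (h21 : p / ((N : ℝ) - 1) ≤ 1 / N) (h11 : (1 : ℝ) / N ≤ 1 - p)
    (hp2pos : 0 < p / ((N : ℝ) - 1)) (h2le1 : p / ((N : ℝ) - 1) ≤ 1 - p)
    (l lpa lna lpb lnb : ℕ) (hl : l ≤ N) (hlpa : lpa ≤ N) (hlna : lna ≤ N)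
    (hlpb : lpb ≤ N) (hlnb : lnb ≤ N) :
    (Ptrans N p l lpa * Ptrans N p lna l * Ptrans N p lnb lpb) /
      (Ptrans N p lna lpa * Ptrans N p l lpb * Ptrans N p lnb l) ≤
    ((1 - p) / (p / ((N : ℝ) - 1))) ^ 2 := by
  have hNpos : (0:ℝ) < N := by positivity
  have hIN : (1:ℝ)/N < 1 - p := by
    have h1 : p * N < (N:ℝ) - 1 := (lt_div_iff₀ hNpos).mp hp
    rw [div_lt_iff₀ hNpos]
    nlinarith
  set q1 := 1 - p with hq1def
  set q2 := p / ((N:ℝ) - 1) with hq2def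
  have hq2 : 0 < q2 := hp2pos
  have hq12 : q2 < q1 := lt_of_le_of_lt h21 hIN
  have hq1 : 0 < q1 := lt_trans hq2 hq12
  have hne : q1 - q2 ≠ 0 := sub_ne_zero.mpr (ne_of_gt hq12)
  have key : ∀ z x : ℕ, Ptrans N p z x = if x = 0 then 1/(N:ℝ) else if z = x then q1 else q2 := by
    intro z x
    unfold Ptrans kdelta
    by_cases hx : x = 0
    · subst hx
      rw [if_pos rfl, if_pos rfl, mul_div_cancel₀ _ hne]
      ring
    · by_cases hz : z = x <;> simp [hx, hz, hq1def, hq2def]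
  have hub : ∀ z x : ℕ, Ptrans N p z x ≤ q1 := by
    intro z x; rw [key]; split_ifs <;> [exact hIN.le; exact le_refl _; exact hq12.le]
  have hlb : ∀ z x : ℕ, q2 ≤ Ptrans N p z x := by
    intro z x; rw [key]; split_ifs <;> [exact h21; exact hq12.le; exact le_refl _]
  have hpos : ∀ z x : ℕ, 0 < Ptrans N p z x := fun z x => lt_of_lt_of_le hq2 (hlb z x)
  by_cases hcase : lna = l
  · subst hcase
    set a := Ptrans N p lna lpa with ha_def
    have ha : 0 < a := hpos _ _
    have hnum : a * Ptrans N p lna lna * Ptrans N p lnb lpb ≤ a * q1 * q1 := by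
      gcongr <;>
        first
          | exact hub _ _
          | exact (hpos _ _).le
          | exact mul_nonneg (hpos _ _).le (hpos _ _).le
    have hden : a * q2 * q2 ≤ a * Ptrans N p lna lpb * Ptrans N p lnb lna := by
      gcongr <;>
        first
          | exact hlb _ _
          | exact (hpos _ _).le
          | exact mul_nonneg (hpos _ _).le (hpos _ _).le
    calc a * Ptrans N p lna lna * Ptrans N p lnb lpb /
          (a * Ptrans N p lna lpb * Ptrans N p lnb lna)
        ≤ (a * q1 * q1) / (a * q2 * q2) := by
          apply div_le_div₀ (by positivity) hnum (by positivity) hden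
      _ = (q1/q2)^2 := by
          field_simp
  · have hbf : Ptrans N p lna l ≤ Ptrans N p lnb l := by
      rw [key, key]
      split_ifs <;>
        first
          | exact le_rfl
          | exact hq12.le
          | exact absurd ‹lna = l› hcase
    set f := Ptrans N p lnb l with hf_def
    have hf : 0 < f := hpos _ _
    have hnum : Ptrans N p l lpa * Ptrans N p lna l * Ptrans N p lnb lpb ≤ q1 * f * q1 := by
      gcongr <;>
        first
          | exact hbf
          | exact hub _ _
          | exact (hpos _ _).le
          | exact mul_nonneg (hpos _ _).le (hpos _ _).le
    have hden : q2 * q2 * f ≤ Ptrans N p lna lpa * Ptrans N p l lpb * f := by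
      gcongr <;>
        first
          | exact hlb _ _
          | exact hf.le
          | exact (hpos _ _).le
          | exact mul_nonneg (hpos _ _).le (hpos _ _).le
    calc Ptrans N p l lpa * Ptrans N p lna l * Ptrans N p lnb lpb /
          (Ptrans N p lna lpa * Ptrans N p l lpb * f)
        ≤ (q1 * f * q1) / (q2 * q2 * f) := by
          apply div_le_div₀ (by positivity) hnum (by positivity) hden
      _ = (q1/q2)^2 := by
          field_simp
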